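/- Fix n ∈ ℕ and q ∈ [1,∞). Let (X,d_X) be a metric space and f : 𝔽₂ⁿ → X. Then for every k, m ∈ {1,…,n} with k + m ≤ n one has E_{k+m}^{(q)}(f) ≤ E_k^{(q)}(f) + E_m^{(q)}(f). -/

import Mathlib

open scoped ENNReal

/-- `E_k^{(q)}(f)` for `f : 𝔽₂ⁿ → X`:
`E_k^{(q)}(f)^q = (1/(2ⁿ·binom(n,k)))·∑_{|I|=k} ∑_{z ∈ 𝔽₂ⁿ} d_X(f(z+e_I), f(z))^q`. -/
noncomputable def cubeE {n : ℕ} {X : Type*} [PseudoMetricSpace X] (q : ℝ)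
    (f : (Fin n → ZMod 2) → X) (k : ℕ) : ℝ :=
  ((∑ I ∈ Finset.univ.filter (fun I : Finset (Fin n) => I.card = k),
      ∑ z : Fin n → ZMod 2,
        dist (f (fun j => z j + if j ∈ I then 1 else 0)) (f z) ^ q) /
    (2 ^ n * (n.choose k : ℝ))) ^ (1 / q)

section Aux

open Finset

/-- The set of disjoint pairs `(J, K)` with `|J| = k`, `|K| = m`. -/
private def cubePairs (n k m : ℕ) : Finset (Finset (Fin n) × Finset (Fin n)) :=
  Finset.univ.filter (fun p => p.1.card = k ∧ p.2.card = m ∧ Disjoint p.1 p.2)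

private lemma card_cubeSets (n j : ℕ) :
    (Finset.univ.filter (fun I : Finset (Fin n) => I.card = j)).card = n.choose j := by
  rw [← Finset.powerset_univ, ← Finset.powersetCard_eq_filter, Finset.card_powersetCard,
    Finset.card_univ, Fintype.card_fin]

private lemma sum_cubePairs_union {n k m : ℕ} (g : Finset (Fin n) → ℝ) :
    ∑ p ∈ cubePairs n k m, g (p.1 ∪ p.2)
      = ((k + m).choose k : ℝ) *
        ∑ I ∈ univ.filter (fun I : Finset (Fin n) => I.card = k + m), g I := by
  have hmaps : ∀ p ∈ cubePairs n k m,
      p.1 ∪ p.2 ∈ univ.filter (fun I : Finset (Fin n) => I.card = k + m) := by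
    intro p hp
    simp only [cubePairs, mem_filter, mem_univ, true_and] at hp ⊢
    rw [card_union_of_disjoint hp.2.2, hp.1, hp.2.1]
  rw [← Finset.sum_fiberwise_of_maps_to hmaps (fun p => g (p.1 ∪ p.2)), Finset.mul_sum]
  refine Finset.sum_congr rfl fun I hI => ?_
  simp only [mem_filter, mem_univ, true_and] at hI
  have hfc : ((cubePairs n k m).filter (fun p => p.1 ∪ p.2 = I)).card = (k + m).choose k := by
    have hb : ((cubePairs n k m).filter (fun p => p.1 ∪ p.2 = I)).card
        = (I.powersetCard k).card := by
      refine Finset.card_nbij' (fun p => p.1) (fun J => (J, I \ J)) ?_ ?_ ?_ ?_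
      · intro p hp
        simp only [cubePairs, mem_coe, mem_filter, mem_univ, true_and] at hp
        exact mem_powersetCard.2 ⟨hp.2 ▸ subset_union_left, hp.1.1⟩
      · intro J hJ
        rw [mem_coe, mem_powersetCard] at hJ
        simp only [cubePairs, mem_coe, mem_filter, mem_univ, true_and]
        refine ⟨⟨hJ.2, ?_, disjoint_sdiff⟩, union_sdiff_of_subset hJ.1⟩
        rw [card_sdiff_of_subset hJ.1, hI, hJ.2, Nat.add_sub_cancel_left]
      · intro p hp
        simp only [cubePairs, mem_coe, mem_filter, mem_univ, true_and] at hp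
        obtain ⟨⟨h1, h2, h3⟩, h4⟩ := hp
        subst h4
        exact Prod.ext rfl (union_sdiff_cancel_left h3)
      · intro J hJ
        rfl
    rw [hb, card_powersetCard, hI]
  rw [Finset.sum_congr rfl (fun p hp => by rw [(mem_filter.1 hp).2]),
    Finset.sum_const, hfc, nsmul_eq_mul]

private lemma sum_cubePairs_snd {n k m : ℕ} (g : Finset (Fin n) → ℝ) :
    ∑ p ∈ cubePairs n k m, g p.2
      = ((n - m).choose k : ℝ) *
        ∑ K ∈ univ.filter (fun K : Finset (Fin n) => K.card = m), g K := by
  have hmaps : ∀ p ∈ cubePairs n k m,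
      p.2 ∈ univ.filter (fun K : Finset (Fin n) => K.card = m) := by
    intro p hp
    simp only [cubePairs, mem_filter, mem_univ, true_and] at hp ⊢
    exact hp.2.1
  rw [← Finset.sum_fiberwise_of_maps_to hmaps (fun p => g p.2), Finset.mul_sum]
  refine Finset.sum_congr rfl fun K hK => ?_
  simp only [mem_filter, mem_univ, true_and] at hK
  have hfc : ((cubePairs n k m).filter (fun p => p.2 = K)).card = (n - m).choose k := by
    have hb : ((cubePairs n k m).filter (fun p => p.2 = K)).card
        = ((univ \ K).powersetCard k).card := by
      refine Finset.card_nbij' (fun p => p.1) (fun J => (J, K)) ?_ ?_ ?_ ?_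
      · intro p hp
        simp only [cubePairs, mem_coe, mem_filter, mem_univ, true_and] at hp
        exact mem_powersetCard.2 ⟨subset_sdiff.2 ⟨subset_univ _, hp.2 ▸ hp.1.2.2⟩, hp.1.1⟩
      · intro J hJ
        rw [mem_coe, mem_powersetCard] at hJ
        simp only [cubePairs, mem_coe, mem_filter, mem_univ, true_and]
        exact ⟨⟨hJ.2, hK, (subset_sdiff.1 hJ.1).2⟩, trivial⟩
      · intro p hp
        simp only [cubePairs, mem_coe, mem_filter, mem_univ, true_and] at hp
        exact Prod.ext rfl hp.2.symm
      · intro J hJ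
        rfl
    rw [hb, card_powersetCard, card_sdiff_of_subset (subset_univ _), Finset.card_univ, Fintype.card_fin, hK]
  rw [Finset.sum_congr rfl (fun p hp => by rw [(mem_filter.1 hp).2]),
    Finset.sum_const, hfc, nsmul_eq_mul]

private lemma sum_cubePairs_fst {n k m : ℕ} (g : Finset (Fin n) → ℝ) :
    ∑ p ∈ cubePairs n k m, g p.1
      = ((n - k).choose m : ℝ) *
        ∑ J ∈ univ.filter (fun J : Finset (Fin n) => J.card = k), g J := by
  have hmaps : ∀ p ∈ cubePairs n k m,
      p.1 ∈ univ.filter (fun J : Finset (Fin n) => J.card = k) := by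
    intro p hp
    simp only [cubePairs, mem_filter, mem_univ, true_and] at hp ⊢
    exact hp.1
  rw [← Finset.sum_fiberwise_of_maps_to hmaps (fun p => g p.1), Finset.mul_sum]
  refine Finset.sum_congr rfl fun J hJ => ?_
  simp only [mem_filter, mem_univ, true_and] at hJ
  have hfc : ((cubePairs n k m).filter (fun p => p.1 = J)).card = (n - k).choose m := by
    have hb : ((cubePairs n k m).filter (fun p => p.1 = J)).card
        = ((univ \ J).powersetCard m).card := by
      refine Finset.card_nbij' (fun p => p.2) (fun K => (J, K)) ?_ ?_ ?_ ?_
      · intro p hp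
        simp only [cubePairs, mem_coe, mem_filter, mem_univ, true_and] at hp
        exact mem_powersetCard.2
          ⟨subset_sdiff.2 ⟨subset_univ _, (hp.2 ▸ hp.1.2.2).symm⟩, hp.1.2.1⟩
      · intro K hK
        rw [mem_coe, mem_powersetCard] at hK
        simp only [cubePairs, mem_coe, mem_filter, mem_univ, true_and]
        exact ⟨⟨hJ, hK.2, ((subset_sdiff.1 hK.1).2).symm⟩, trivial⟩
      · intro p hp
        simp only [cubePairs, mem_coe, mem_filter, mem_univ, true_and] at hp
        exact Prod.ext hp.2.symm rfl
      · intro K hK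
        rfl
    rw [hb, card_powersetCard, card_sdiff_of_subset (subset_univ _), Finset.card_univ, Fintype.card_fin, hJ]
  rw [Finset.sum_congr rfl (fun p hp => by rw [(mem_filter.1 hp).2]),
    Finset.sum_const, hfc, nsmul_eq_mul]

/-- The inner sum `∑_z d(f(z+e_I), f(z))^q`. -/
private noncomputable def cubeD {n : ℕ} {X : Type*} [PseudoMetricSpace X] (q : ℝ)
    (f : (Fin n → ZMod 2) → X) (I : Finset (Fin n)) : ℝ :=
  ∑ z : Fin n → ZMod 2, dist (f (fun j => z j + if j ∈ I then 1 else 0)) (f z) ^ q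

private lemma cubeD_nonneg {n : ℕ} {X : Type*} [PseudoMetricSpace X] (q : ℝ)
    (f : (Fin n → ZMod 2) → X) (I : Finset (Fin n)) : 0 ≤ cubeD q f I :=
  Finset.sum_nonneg fun _ _ => Real.rpow_nonneg dist_nonneg q

/-- Change of variables `z ↦ z + e_J`. -/
private lemma sum_cubeShift {n : ℕ} {X : Type*} [PseudoMetricSpace X] (q : ℝ)
    (f : (Fin n → ZMod 2) → X) {J K : Finset (Fin n)} (hJK : Disjoint J K) :
    ∑ z : Fin n → ZMod 2,
        dist (f (fun j => z j + if j ∈ J ∪ K then 1 else 0))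
          (f (fun j => z j + if j ∈ J then 1 else 0)) ^ q
      = cubeD q f K := by
  have h11 : (1 : ZMod 2) + 1 = 0 := by decide
  set c : Fin n → ZMod 2 := fun j => if j ∈ J then (1 : ZMod 2) else 0 with hc
  refine Fintype.sum_equiv (Equiv.addRight c) _ _ fun w => ?_
  have e1 : (fun j => (Equiv.addRight c w) j + if j ∈ K then 1 else 0)
      = fun j => w j + if j ∈ J ∪ K then 1 else 0 := by
    funext j
    simp only [Equiv.coe_addRight, Pi.add_apply, hc, Finset.mem_union]
    by_cases hJ : j ∈ J
    · have hK : j ∉ K := Finset.disjoint_left.1 hJK hJ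
      simp [hJ, hK]
    · simp [hJ]
  have e2 : (Equiv.addRight c w : Fin n → ZMod 2)
      = fun j => w j + if j ∈ J then 1 else 0 := by
    funext j
    simp only [Equiv.coe_addRight, Pi.add_apply, hc]
  rw [e1, e2]

private def cubeF {n : ℕ} {X : Type*} [PseudoMetricSpace X] (q : ℝ)
    (f : (Fin n → ZMod 2) → X)
    (x : (Finset (Fin n) × Finset (Fin n)) × (Fin n → ZMod 2)) : ℝ :=
  dist (f (fun j => x.2 j + if j ∈ x.1.1 ∪ x.1.2 then 1 else 0)) (f x.2)

private def cubeG {n : ℕ} {X : Type*} [PseudoMetricSpace X] (q : ℝ)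
    (f : (Fin n → ZMod 2) → X)
    (x : (Finset (Fin n) × Finset (Fin n)) × (Fin n → ZMod 2)) : ℝ :=
  dist (f (fun j => x.2 j + if j ∈ x.1.1 ∪ x.1.2 then 1 else 0))
    (f (fun j => x.2 j + if j ∈ x.1.1 then 1 else 0))

private def cubeH {n : ℕ} {X : Type*} [PseudoMetricSpace X] (q : ℝ)
    (f : (Fin n → ZMod 2) → X)
    (x : (Finset (Fin n) × Finset (Fin n)) × (Fin n → ZMod 2)) : ℝ :=
  dist (f (fun j => x.2 j + if j ∈ x.1.1 then 1 else 0)) (f x.2)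

private lemma cubeF_nonneg {n : ℕ} {X : Type*} [PseudoMetricSpace X] (q : ℝ)
    (f : (Fin n → ZMod 2) → X) (x) : 0 ≤ cubeF q f x := dist_nonneg

private lemma cubeG_nonneg {n : ℕ} {X : Type*} [PseudoMetricSpace X] (q : ℝ)
    (f : (Fin n → ZMod 2) → X) (x) : 0 ≤ cubeG q f x := dist_nonneg

private lemma cubeH_nonneg {n : ℕ} {X : Type*} [PseudoMetricSpace X] (q : ℝ)
    (f : (Fin n → ZMod 2) → X) (x) : 0 ≤ cubeH q f x := dist_nonneg

private lemma cubeF_le {n : ℕ} {X : Type*} [PseudoMetricSpace X] (q : ℝ)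
    (f : (Fin n → ZMod 2) → X) (x) : cubeF q f x ≤ cubeG q f x + cubeH q f x :=
  dist_triangle _ _ _

private lemma sum_cubeF {n : ℕ} {X : Type*} [PseudoMetricSpace X] (q : ℝ)
    (f : (Fin n → ZMod 2) → X) (p : Finset (Fin n) × Finset (Fin n)) :
    ∑ z : Fin n → ZMod 2, cubeF q f (p, z) ^ q = cubeD q f (p.1 ∪ p.2) := rfl

private lemma sum_cubeH {n : ℕ} {X : Type*} [PseudoMetricSpace X] (q : ℝ)
    (f : (Fin n → ZMod 2) → X) (p : Finset (Fin n) × Finset (Fin n)) :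
    ∑ z : Fin n → ZMod 2, cubeH q f (p, z) ^ q = cubeD q f p.1 := rfl

private lemma sum_cubeG {n : ℕ} {X : Type*} [PseudoMetricSpace X] (q : ℝ)
    (f : (Fin n → ZMod 2) → X) {p : Finset (Fin n) × Finset (Fin n)}
    (h : Disjoint p.1 p.2) :
    ∑ z : Fin n → ZMod 2, cubeG q f (p, z) ^ q = cubeD q f p.2 := by
  show ∑ z : Fin n → ZMod 2,
      dist (f (fun j => z j + if j ∈ p.1 ∪ p.2 then 1 else 0))
        (f (fun j => z j + if j ∈ p.1 then 1 else 0)) ^ q = cubeD q f p.2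
  exact sum_cubeShift q f h

end Aux

private lemma cubeE_eq {n : ℕ} {X : Type*} [PseudoMetricSpace X] (q : ℝ)
    (f : (Fin n → ZMod 2) → X) (j : ℕ) :
    cubeE q f j = ((∑ I ∈ Finset.univ.filter (fun I : Finset (Fin n) => I.card = j),
      cubeD q f I) / (2 ^ n * (n.choose j : ℝ))) ^ (1 / q) := rfl

set_option maxHeartbeats 1000000 in
/-- **Lemma (subadditivity of the diagonal averages `E_k^{(q)}`).**
Fix `n ∈ ℕ` and `q ∈ [1,∞)`, a metric space `X` and `f : 𝔽₂ⁿ → X`.  For every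
`k, m ∈ {1,…,n}` with `k + m ≤ n`, `E_{k+m}^{(q)}(f) ≤ E_k^{(q)}(f) + E_m^{(q)}(f)`. -/
theorem cubeE_subadditive {n : ℕ} (q : ℝ) (hq : 1 ≤ q)
    (X : Type*) [MetricSpace X] (f : (Fin n → ZMod 2) → X)
    (k m : ℕ) (hk1 : 1 ≤ k) (hkn : k ≤ n) (hm1 : 1 ≤ m) (hmn : m ≤ n) (hkm : k + m ≤ n) :
    cubeE q f (k + m) ≤ cubeE q f k + cubeE q f m := by
  classical
  have hq0 : (0 : ℝ) < q := lt_of_lt_of_le one_pos hq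
  have hq0' : (0 : ℝ) < 1 / q := by positivity
  set S : ℕ → ℝ := fun j =>
    ∑ I ∈ Finset.univ.filter (fun I : Finset (Fin n) => I.card = j), cubeD q f I with hS
  set Ω : Finset ((Finset (Fin n) × Finset (Fin n)) × (Fin n → ZMod 2)) :=
    cubePairs n k m ×ˢ Finset.univ with hΩ
  have hcube : ∀ j, cubeE q f j = (S j / (2 ^ n * (n.choose j : ℝ))) ^ (1 / q) :=
    fun j => cubeE_eq q f j
  -- Minkowski
  have hmink : (∑ x ∈ Ω, cubeF q f x ^ q) ^ (1 / q)
      ≤ (∑ x ∈ Ω, cubeG q f x ^ q) ^ (1 / q) + (∑ x ∈ Ω, cubeH q f x ^ q) ^ (1 / q) := by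
    have step1 : (∑ x ∈ Ω, cubeF q f x ^ q) ^ (1 / q)
        ≤ (∑ x ∈ Ω, |cubeG q f x + cubeH q f x| ^ q) ^ (1 / q) := by
      refine Real.rpow_le_rpow
        (Finset.sum_nonneg fun x _ => Real.rpow_nonneg (cubeF_nonneg q f x) q)
        (Finset.sum_le_sum fun x _ => ?_) hq0'.le
      exact Real.rpow_le_rpow (cubeF_nonneg q f x)
        (le_trans (cubeF_le q f x) (le_abs_self _)) hq0.le
    refine le_trans step1 (le_trans (Real.Lp_add_le Ω (cubeG q f) (cubeH q f) hq) (le_of_eq ?_))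
    congr 1
    · exact congrArg (· ^ (1 / q)) (Finset.sum_congr rfl fun x _ => by
        rw [abs_of_nonneg (cubeG_nonneg q f x)])
    · exact congrArg (· ^ (1 / q)) (Finset.sum_congr rfl fun x _ => by
        rw [abs_of_nonneg (cubeH_nonneg q f x)])
  -- evaluate the three sums
  have hFsum : ∑ x ∈ Ω, cubeF q f x ^ q = ((k + m).choose k : ℝ) * S (k + m) := by
    rw [hΩ, Finset.sum_product, Finset.sum_congr rfl (fun p _ => sum_cubeF q f p)]
    exact sum_cubePairs_union (g := cubeD q f)
  have hGsum : ∑ x ∈ Ω, cubeG q f x ^ q = ((n - m).choose k : ℝ) * S m := by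
    have hstep : ∀ p ∈ cubePairs n k m,
        ∑ z : Fin n → ZMod 2, cubeG q f (p, z) ^ q = cubeD q f p.2 := by
      intro p hp
      simp only [cubePairs, Finset.mem_filter, Finset.mem_univ, true_and] at hp
      exact sum_cubeG q f hp.2.2
    rw [hΩ, Finset.sum_product, Finset.sum_congr rfl hstep]
    exact sum_cubePairs_snd (g := cubeD q f)
  have hHsum : ∑ x ∈ Ω, cubeH q f x ^ q = ((n - k).choose m : ℝ) * S k := by
    rw [hΩ, Finset.sum_product, Finset.sum_congr rfl (fun p _ => sum_cubeH q f p)]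
    exact sum_cubePairs_fst (g := cubeD q f)
  -- the cardinality of cubePairs, three ways
  have hcard1 : ((cubePairs n k m).card : ℝ)
      = ((k + m).choose k : ℝ) * (n.choose (k + m) : ℝ) := by
    have := sum_cubePairs_union (n := n) (k := k) (m := m) (fun _ => (1 : ℝ))
    simpa [card_cubeSets] using this
  have hcard2 : ((cubePairs n k m).card : ℝ)
      = ((n - m).choose k : ℝ) * (n.choose m : ℝ) := by
    have := sum_cubePairs_snd (n := n) (k := k) (m := m) (fun _ => (1 : ℝ))
    simpa [card_cubeSets] using this
  have hcard3 : ((cubePairs n k m).card : ℝ)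
      = ((n - k).choose m : ℝ) * (n.choose k : ℝ) := by
    have := sum_cubePairs_fst (n := n) (k := k) (m := m) (fun _ => (1 : ℝ))
    simpa [card_cubeSets] using this
  -- positivity facts
  have hc1 : (0 : ℝ) < ((k + m).choose k : ℝ) := by
    exact_mod_cast Nat.choose_pos (Nat.le_add_right k m)
  have hc2 : (0 : ℝ) < ((n - m).choose k : ℝ) := by
    exact_mod_cast Nat.choose_pos (by omega)
  have hc3 : (0 : ℝ) < ((n - k).choose m : ℝ) := by
    exact_mod_cast Nat.choose_pos (by omega)
  have hn1 : (0 : ℝ) < (n.choose (k + m) : ℝ) := by exact_mod_cast Nat.choose_pos hkm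
  have hn2 : (0 : ℝ) < (n.choose m : ℝ) := by exact_mod_cast Nat.choose_pos hmn
  have hn3 : (0 : ℝ) < (n.choose k : ℝ) := by exact_mod_cast Nat.choose_pos hkn
  have h2n : (0 : ℝ) < (2 : ℝ) ^ n := by positivity
  set D : ℝ := ((cubePairs n k m).card : ℝ) * 2 ^ n with hD
  have hDpos : 0 < D := by rw [hD, hcard1]; positivity
  -- rewrite the cubeE's
  have e1 : cubeE q f (k + m) = ((∑ x ∈ Ω, cubeF q f x ^ q) / D) ^ (1 / q) := by
    rw [hcube, hFsum, hD, hcard1]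
    congr 1
    field_simp
  have e2 : cubeE q f m = ((∑ x ∈ Ω, cubeG q f x ^ q) / D) ^ (1 / q) := by
    rw [hcube, hGsum, hD, hcard2]
    congr 1
    field_simp
  have e3 : cubeE q f k = ((∑ x ∈ Ω, cubeH q f x ^ q) / D) ^ (1 / q) := by
    rw [hcube, hHsum, hD, hcard3]
    congr 1
    field_simp
  rw [e1, e2, e3, add_comm (((∑ x ∈ Ω, cubeH q f x ^ q) / D) ^ (1 / q))]
  have hA : (0 : ℝ) ≤ ∑ x ∈ Ω, cubeF q f x ^ q :=
    Finset.sum_nonneg fun x _ => Real.rpow_nonneg (cubeF_nonneg q f x) q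
  have hB : (0 : ℝ) ≤ ∑ x ∈ Ω, cubeG q f x ^ q :=
    Finset.sum_nonneg fun x _ => Real.rpow_nonneg (cubeG_nonneg q f x) q
  have hC : (0 : ℝ) ≤ ∑ x ∈ Ω, cubeH q f x ^ q :=
    Finset.sum_nonneg fun x _ => Real.rpow_nonneg (cubeH_nonneg q f x) q
  rw [Real.div_rpow hA hDpos.le, Real.div_rpow hB hDpos.le, Real.div_rpow hC hDpos.le,
    ← add_div]
  exact div_le_div_of_nonneg_right hmink (Real.rpow_pos_of_pos hDpos _).le
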